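/- If u is G-convex and D_xG is Lipschitz in x with constant k uniformly in (y,z), then for λ ≥ k/2 the function v(x) := u(x) + λ‖x‖² is convex on X. -/

import Mathlib

def GConvexOn {E F : Type*} (X : Set E) (Ycl : Set F) (Zcl : Set ℝ)
    (G : E → F → ℝ → ℝ) (u : E → ℝ) : Prop :=
  ∀ x₀ ∈ X, ∃ y₀ ∈ Ycl, ∃ z₀ ∈ Zcl,
    u x₀ = G x₀ y₀ z₀ ∧ ∀ x ∈ X, G x y₀ z₀ ≤ u x

/-- If `u` is `G`-convex and `D_x G` is `k`-Lipschitz in `x` uniformly in `(y,z)`, then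
for `λ ≥ k/2` the function `v(x) := u(x) + λ‖x‖²` is convex on `X`. -/
theorem gconvex_plus_lambda_sq_convex {M : ℕ} {F : Type*}
    (X : Set (EuclideanSpace ℝ (Fin M))) (Ycl : Set F) (Zcl : Set ℝ)
    (hXopen : IsOpen X) (hXconv : Convex ℝ X)
    (G : EuclideanSpace ℝ (Fin M) → F → ℝ → ℝ)
    (Gx : EuclideanSpace ℝ (Fin M) → F → ℝ → (EuclideanSpace ℝ (Fin M) →L[ℝ] ℝ))
    (hGx : ∀ y ∈ Ycl, ∀ z ∈ Zcl, ∀ x ∈ X, HasFDerivAt (fun x' => G x' y z) (Gx x y z) x)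
    (hGanti : ∀ x y, StrictAnti (G x y))
    (k : ℝ) (hk : 0 ≤ k)
    (hLip : ∀ y ∈ Ycl, ∀ z ∈ Zcl, ∀ x ∈ X, ∀ x' ∈ X,
      ‖Gx x y z - Gx x' y z‖ ≤ k * ‖x - x'‖)
    (lam : ℝ) (hlam : k / 2 ≤ lam)
    (u : EuclideanSpace ℝ (Fin M) → ℝ)
    (hu : GConvexOn X Ycl Zcl G u) :
    ConvexOn ℝ X (fun x => u x + lam * ‖x‖ ^ 2) := by
  -- Core: for each (y,z) ∈ Ycl × Zcl, the function x ↦ G x y z + lam‖x‖² is convex on X.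
  have key : ∀ y ∈ Ycl, ∀ z ∈ Zcl, ∀ p ∈ X, ∀ q ∈ X, ∀ a b : ℝ, 0 ≤ a → 0 ≤ b → a + b = 1 →
      G (a • p + b • q) y z + lam * ‖a • p + b • q‖ ^ 2 ≤
        a * (G p y z + lam * ‖p‖ ^ 2) + b * (G q y z + lam * ‖q‖ ^ 2) := by
    intro y hy z hz p hp q hq a b ha hb hab
    set d : EuclideanSpace ℝ (Fin M) := q - p with hd
    set c : ℝ → EuclideanSpace ℝ (Fin M) := fun t => p + t • d with hc
    have hcseg : ∀ t : ℝ, t ∈ Set.Icc (0:ℝ) 1 → c t ∈ X := by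
      intro t ht
      have : c t = (1 - t) • p + t • q := by
        simp only [hc, hd]
        module
      rw [this]
      exact hXconv hp hq (by linarith [ht.1, ht.2]) ht.1 (by ring)
    set ip : ℝ := inner ℝ p d with hip
    set nd : ℝ := ‖d‖ ^ 2 with hnd
    have hnorm : ∀ t : ℝ, ‖c t‖ ^ 2 = ‖p‖ ^ 2 + (2 * ip) * t + nd * t ^ 2 := by
      intro t
      simp only [hc, hip, hnd]
      rw [← real_inner_self_eq_norm_sq (p + t • d), ← real_inner_self_eq_norm_sq p,
        ← real_inner_self_eq_norm_sq d, real_inner_add_add_self,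
        real_inner_smul_right, real_inner_smul_left, real_inner_smul_right]
      ring
    set g : ℝ → ℝ := fun t => G (c t) y z + lam * ‖c t‖ ^ 2 with hg
    set g' : ℝ → ℝ := fun t => (Gx (c t) y z) d + lam * (2 * ip + nd * (2 * t)) with hg'
    have hcderiv : ∀ t : ℝ, HasDerivAt c d t := by
      intro t
      have h1 : HasDerivAt (fun t : ℝ => t • d) ((1:ℝ) • d) t := (hasDerivAt_id t).smul_const d
      simpa [hc] using h1.const_add p
    have hgd : ∀ t : ℝ, c t ∈ X → HasDerivAt g (g' t) t := by
      intro t hct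
      have h1 : HasDerivAt (fun t => G (c t) y z) ((Gx (c t) y z) d) t :=
        (hGx y hy z hz (c t) hct).comp_hasDerivAt t (hcderiv t)
      have h2 : HasDerivAt (fun t : ℝ => lam * (‖p‖ ^ 2 + (2 * ip) * t + nd * t ^ 2))
          (lam * (2 * ip + nd * (2 * t))) t := by
        have ha1 : HasDerivAt (fun t : ℝ => (2 * ip) * t) (2 * ip) t := by
          simpa using (hasDerivAt_id t).const_mul (2 * ip)
        have ha2 : HasDerivAt (fun t : ℝ => nd * t ^ 2) (nd * (2 * t)) t := by
          simpa using (hasDerivAt_pow 2 t).const_mul nd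
        have := (((hasDerivAt_const t (‖p‖ ^ 2)).add ha1).add ha2).const_mul lam
        simpa using this
      have h2' : HasDerivAt (fun t => lam * ‖c t‖ ^ 2) (lam * (2 * ip + nd * (2 * t))) t := by
        refine h2.congr_of_eventuallyEq ?_
        filter_upwards with s
        rw [hnorm s]
      exact h1.add h2'
    have hcont : ContinuousOn g (Set.Icc (0:ℝ) 1) := fun t ht =>
      ((hgd t (hcseg t ht)).continuousAt).continuousWithinAt
    have hdiff : DifferentiableOn ℝ g (interior (Set.Icc (0:ℝ) 1)) := by
      rw [interior_Icc]
      intro t ht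
      exact ((hgd t (hcseg t ⟨ht.1.le, ht.2.le⟩)).differentiableAt).differentiableWithinAt
    have hmono : MonotoneOn (deriv g) (interior (Set.Icc (0:ℝ) 1)) := by
      rw [interior_Icc]
      intro s hs t ht hst
      have hcs : c s ∈ X := hcseg s ⟨hs.1.le, hs.2.le⟩
      have hct : c t ∈ X := hcseg t ⟨ht.1.le, ht.2.le⟩
      rw [(hgd s hcs).deriv, (hgd t hct).deriv]
      have hpair : (Gx (c s) y z) d - (Gx (c t) y z) d ≤ k * (t - s) * nd := by
        have h1 : (Gx (c s) y z) d - (Gx (c t) y z) d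
            = (Gx (c s) y z - Gx (c t) y z) d := by simp
        have h2 : (Gx (c s) y z - Gx (c t) y z) d
            ≤ ‖Gx (c s) y z - Gx (c t) y z‖ * ‖d‖ := by
          calc (Gx (c s) y z - Gx (c t) y z) d
              ≤ ‖(Gx (c s) y z - Gx (c t) y z) d‖ := le_abs_self _
            _ ≤ ‖Gx (c s) y z - Gx (c t) y z‖ * ‖d‖ :=
              (Gx (c s) y z - Gx (c t) y z).le_opNorm d
        have h3 : ‖Gx (c s) y z - Gx (c t) y z‖ ≤ k * ((t - s) * ‖d‖) := by
          have := hLip y hy z hz (c s) hcs (c t) hct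
          have heq : c s - c t = (s - t) • d := by
            simp only [hc]; module
          rw [heq] at this
          rw [norm_smul] at this
          simpa [abs_of_nonpos (by linarith : s - t ≤ 0)] using this
        have hdnn : (0:ℝ) ≤ ‖d‖ := norm_nonneg d
        have h4 : ‖Gx (c s) y z - Gx (c t) y z‖ * ‖d‖ ≤ k * ((t - s) * ‖d‖) * ‖d‖ :=
          mul_le_mul_of_nonneg_right h3 hdnn
        rw [h1]
        calc (Gx (c s) y z - Gx (c t) y z) d ≤ ‖Gx (c s) y z - Gx (c t) y z‖ * ‖d‖ := h2
          _ ≤ k * ((t - s) * ‖d‖) * ‖d‖ := h4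
          _ = k * (t - s) * nd := by rw [hnd]; ring
      simp only [hg']
      have hndnn : (0:ℝ) ≤ nd := by rw [hnd]; positivity
      nlinarith [mul_le_mul_of_nonneg_right hlam (mul_nonneg (by linarith : (0:ℝ) ≤ t - s) hndnn)]
    have hconv : ConvexOn ℝ (Set.Icc (0:ℝ) 1) g :=
      MonotoneOn.convexOn_of_deriv (convex_Icc 0 1) hcont hdiff hmono
    have h01 := hconv.2 (Set.left_mem_Icc.2 zero_le_one) (Set.right_mem_Icc.2 zero_le_one)
      ha hb hab
    have hc0 : c 0 = p := by simp [hc]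
    have hc1 : c 1 = q := by simp [hc, hd]
    have hcb : c (a • (0:ℝ) + b • 1) = a • p + b • q := by
      simp only [hc, hd, smul_eq_mul, mul_zero, mul_one, zero_add]
      have : a = 1 - b := by linarith
      rw [this]; module
    calc G (a • p + b • q) y z + lam * ‖a • p + b • q‖ ^ 2 = g (a • (0:ℝ) + b • 1) := by
          simp only [hg, hcb]
      _ ≤ a * g 0 + b * g 1 := by simpa [smul_eq_mul] using h01
      _ = a * (G p y z + lam * ‖p‖ ^ 2) + b * (G q y z + lam * ‖q‖ ^ 2) := by
          simp only [hg, hc0, hc1]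
  refine ⟨hXconv, ?_⟩
  intro p hp q hq a b ha hb hab
  have hpq : a • p + b • q ∈ X := hXconv hp hq ha hb hab
  obtain ⟨y₀, hy₀, z₀, hz₀, heq, hle⟩ := hu (a • p + b • q) hpq
  have h1 := key y₀ hy₀ z₀ hz₀ p hp q hq a b ha hb hab
  have h2 : G p y₀ z₀ ≤ u p := hle p hp
  have h3 : G q y₀ z₀ ≤ u q := hle q hq
  simp only [smul_eq_mul]
  rw [heq]
  nlinarith [h1, mul_le_mul_of_nonneg_left h2 ha, mul_le_mul_of_nonneg_left h3 hb]
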